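/- Let R be a ring and M an R-module of finite length. Let σ be a simple R-module such that: (a) σ occurs with multiplicity exactly one among the composition factors of M; (b) every simple quotient of M is isomorphic to σ; (c) σ is isomorphic to a submodule of M and to a quotient of M. Then M is simple (hence M ≅ σ). -/

import Mathlib

open Submodule

section Aux

variable {R M : Type*} [Ring R] [AddCommGroup M] [Module R M]

/-- Any interval `[A, B]` in the submodule lattice of a finite length module can be
filled in with a composition series. -/
theorem stmt16_exists_series [IsNoetherian R M] [IsArtinian R M] (B : Submodule R M) :
    ∀ A : Submodule R M, A ≤ B → ∃ t : CompositionSeries (Submodule R M),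
      t.head = A ∧ t.last = B := by
  have wf : WellFounded ((· > ·) : Submodule R M → Submodule R M → Prop) :=
    (wellFoundedGT (R := R) (M := M)).wf
  intro A
  refine wf.induction
    (C := fun A => A ≤ B → ∃ t : CompositionSeries (Submodule R M),
      t.head = A ∧ t.last = B) A ?_
  intro A ih hAB
  rcases eq_or_lt_of_le hAB with rfl | hlt
  · exact ⟨RelSeries.singleton _ A, rfl, rfl⟩
  · obtain ⟨A', hA'mem, hA'min⟩ :=
      (IsWellFounded.wf (r := ((· < ·) : Submodule R M → Submodule R M → Prop))).has_min
        {C | A < C ∧ C ≤ B} ⟨B, hlt, le_rfl⟩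
    have hcov : A ⋖ A' := ⟨hA'mem.1, fun C hAC hCA' =>
      hA'min C ⟨hAC, hCA'.le.trans hA'mem.2⟩ hCA'⟩
    obtain ⟨t, ht1, ht2⟩ := ih A' hA'mem.1 hA'mem.2
    exact ⟨t.cons A (show JordanHolderLattice.IsMaximal A t.head by rw [ht1]; exact hcov),
      by simp, by simpa using ht2⟩

variable {σ : Type*} [AddCommGroup σ] [Module R σ]

theorem stmt16_fct_congr {A B A' B' : Submodule R M} (hA : A = A') (hB : B = B')
    (h : Nonempty ((↥B ⧸ Submodule.comap B.subtype A) ≃ₗ[R] σ)) :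
    Nonempty ((↥B' ⧸ Submodule.comap B'.subtype A') ≃ₗ[R] σ) := by
  subst hA; subst hB; exact h

/-- The factor `⊤ / K` is the quotient `M / K`. -/
noncomputable def stmt16_topQuot (K : Submodule R M) :
    (↥(⊤ : Submodule R M) ⧸ Submodule.comap (⊤ : Submodule R M).subtype K) ≃ₗ[R] M ⧸ K :=
  Submodule.Quotient.equiv _ _ Submodule.topEquiv (by
    ext x
    simp only [Submodule.mem_map, Submodule.mem_comap]
    constructor
    · rintro ⟨y, hy, rfl⟩
      simpa using hy
    · intro hx
      exact ⟨⟨x, trivial⟩, by simpa using hx, by simp⟩)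

end Aux

/-- Multiplicity-one argument underlying Theorem 2.13(ii): a finite length module
with a simple module σ occurring exactly once among its composition factors,
all of whose simple quotients are isomorphic to σ, and containing σ both as a
submodule and as a quotient, is itself simple and isomorphic to σ. -/
theorem stmt16 (R M σ : Type*) [Ring R] [AddCommGroup M] [Module R M]
    [AddCommGroup σ] [Module R σ] [IsSimpleModule R σ]
    (s : CompositionSeries (Submodule R M))
    (hhead : s.head = ⊥) (hlast : s.last = ⊤)
    (hmult : Nat.card {i : Fin s.length //
      Nonempty ((↥(s.toFun i.succ) ⧸
        Submodule.comap (s.toFun i.succ).subtype (s.toFun i.castSucc)) ≃ₗ[R] σ)} = 1)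
    (hquot : ∀ P : Submodule R M, IsSimpleModule R (M ⧸ P) → Nonempty ((M ⧸ P) ≃ₗ[R] σ))
    (hsub : ∃ ι : σ →ₗ[R] M, Function.Injective ι)
    (hsurj : ∃ π : M →ₗ[R] σ, Function.Surjective π) :
    IsSimpleModule R M ∧ Nonempty (M ≃ₗ[R] σ) := by
  obtain ⟨ι, hι⟩ := hsub
  obtain ⟨π, hπ⟩ := hsurj
  have hfl : IsFiniteLength R M :=
    isFiniteLength_of_exists_compositionSeries ⟨s, hhead, hlast⟩
  obtain ⟨hnoeth, hart⟩ := isFiniteLength_iff_isNoetherian_isArtinian.mp hfl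
  set K := LinearMap.ker π with hKdef
  have eKσ : (M ⧸ K) ≃ₗ[R] σ := π.quotKerEquivOfSurjective hπ
  have hKsimple : IsSimpleModule R (M ⧸ K) := IsSimpleModule.congr eKσ
  by_cases hKbot : K = ⊥
  · have hbij : Function.Bijective π := ⟨by rw [← LinearMap.ker_eq_bot]; exact hKbot, hπ⟩
    let e : M ≃ₗ[R] σ := LinearEquiv.ofBijective π hbij
    exact ⟨IsSimpleModule.congr e, ⟨e⟩⟩
  exfalso
  have hKcoatom : IsCoatom K := isSimpleModule_iff_isCoatom.mp hKsimple
  have hKtop : K ⋖ ⊤ := ⟨hKcoatom.1.lt_top, fun C hKC hC => hC.ne (hKcoatom.2 C hKC)⟩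
  -- the embedded copy of σ
  set N := LinearMap.range ι with hNdef
  have eNσ : σ ≃ₗ[R] ↥N := LinearEquiv.ofInjective ι hι
  have hNsimple : IsSimpleModule R ↥N := IsSimpleModule.congr eNσ.symm
  have hNatom : IsAtom N := isSimpleModule_iff_isAtom.mp hNsimple
  -- find A ⋖ B ≤ K whose factor is σ
  obtain ⟨A, B, hAB, hBK, hf1⟩ :
      ∃ A B : Submodule R M, A ⋖ B ∧ B ≤ K ∧
        Nonempty ((↥B ⧸ Submodule.comap B.subtype A) ≃ₗ[R] σ) := by
    by_cases hNK : N ≤ K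
    · refine ⟨⊥, N, hNatom.bot_covBy, hNK, ⟨?_⟩⟩
      exact (Submodule.quotEquivOfEqBot _
        (by rw [Submodule.comap_bot, Submodule.ker_subtype])).trans eNσ.symm
    · -- N ⊓ K = ⊥ and K ⊔ N = ⊤
      have hNKbot : N ⊓ K = ⊥ :=
        hNatom.2 _ (lt_of_le_of_ne inf_le_left (fun h => hNK (h ▸ inf_le_right)))
      have hmapN : Submodule.map π N = ⊤ := by
        rcases eq_bot_or_eq_top (Submodule.map π N) with h | h
        · exfalso
          apply hNK
          intro x hx
          have hx' : π x ∈ Submodule.map π N := Submodule.mem_map_of_mem hx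
          rw [h, Submodule.mem_bot] at hx'
          exact hx'
        · exact h
      have hKN : K ⊔ N = ⊤ := by
        rw [eq_top_iff]
        intro m _
        have : π m ∈ Submodule.map π N := by rw [hmapN]; trivial
        obtain ⟨n, hn, hnm⟩ := this
        have hmk : m - n ∈ K := by
          simp only [hKdef, LinearMap.mem_ker, map_sub, hnm, sub_self]
        have : m = (m - n) + n := by abel
        rw [this]
        exact Submodule.add_mem_sup hmk hn
      -- a maximal proper submodule P of K
      obtain ⟨P, hPmem, hPmin⟩ :=
        (wellFoundedGT (R := R) (M := M)).wf.has_min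
          {C : Submodule R M | C < K} ⟨⊥, bot_lt_iff_ne_bot.mpr hKbot⟩
      have hPK : P ⋖ K := ⟨hPmem, fun C hPC hCK => hPmin C hCK hPC⟩
      -- the map K → M / (P ⊔ N)
      set φ : ↥K →ₗ[R] M ⧸ (P ⊔ N) := (P ⊔ N).mkQ.comp K.subtype with hφdef
      have hPNK : (P ⊔ N) ⊓ K = P := by
        rw [sup_inf_assoc_of_le N hPK.le, hNKbot, sup_bot_eq]
      have hkerφ : LinearMap.ker φ = Submodule.comap K.subtype P := by
        rw [hφdef, LinearMap.ker_comp, Submodule.ker_mkQ]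
        ext x
        simp only [Submodule.mem_comap]
        constructor
        · intro hx
          have : (x : M) ∈ (P ⊔ N) ⊓ K := ⟨hx, x.2⟩
          rwa [hPNK] at this
        · intro hx
          exact Submodule.mem_sup_left hx
      have hφsurj : Function.Surjective φ := by
        intro x
        obtain ⟨m, rfl⟩ := (P ⊔ N).mkQ_surjective x
        have hm : m ∈ K ⊔ (P ⊔ N) := by
          have : K ⊔ (P ⊔ N) = ⊤ := by
            rw [eq_top_iff, ← hKN]
            exact sup_le le_sup_left (le_sup_of_le_right le_sup_right)
          rw [this]; trivial
        obtain ⟨k, hk, w, hw, rfl⟩ := Submodule.mem_sup.mp hm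
        refine ⟨⟨k, hk⟩, ?_⟩
        show (P ⊔ N).mkQ k = (P ⊔ N).mkQ (k + w)
        rw [Submodule.mkQ_apply, Submodule.mkQ_apply, Submodule.Quotient.eq]
        simpa using Submodule.neg_mem _ hw
      have eKP : (↥K ⧸ Submodule.comap K.subtype P) ≃ₗ[R] M ⧸ (P ⊔ N) :=
        (Submodule.quotEquivOfEq _ _ hkerφ.symm).trans (φ.quotKerEquivOfSurjective hφsurj)
      have hKPsimple : IsSimpleModule R (↥K ⧸ Submodule.comap K.subtype P) :=
        (covBy_iff_quot_is_simple hPK.le).mp hPK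
      have hPNsimple : IsSimpleModule R (M ⧸ (P ⊔ N)) := IsSimpleModule.congr eKP.symm
      obtain ⟨g⟩ := hquot (P ⊔ N) hPNsimple
      exact ⟨P, K, hPK, le_rfl, ⟨eKP.trans g⟩⟩
  -- build a composition series with two σ-factors
  obtain ⟨u₁, hu₁h, hu₁l⟩ := stmt16_exists_series A ⊥ bot_le
  obtain ⟨u₂, hu₂h, hu₂l⟩ := stmt16_exists_series K B hBK
  have hvrel : JordanHolderLattice.IsMaximal u₁.last B := by rw [hu₁l]; exact hAB
  set v : CompositionSeries (Submodule R M) := u₁.snoc B hvrel with hvdef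
  have hvl : v.last = B := RelSeries.last_snoc _ _ _
  set t₁ : CompositionSeries (Submodule R M) := v.smash u₂ (hvl.trans hu₂h.symm) with ht₁def
  have ht₁l : t₁.last = K := (RelSeries.last_smash _).trans hu₂l
  have htrel : JordanHolderLattice.IsMaximal t₁.last ⊤ := by rw [ht₁l]; exact hKtop
  set t : CompositionSeries (Submodule R M) := t₁.snoc ⊤ htrel with htdef
  -- indices of the two σ-factors
  set i₀ : Fin (u₁.length + 1) := Fin.last u₁.length with hi₀def
  set k₀ : Fin (v.length + u₂.length) := Fin.castAdd u₂.length i₀ with hk₀def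
  set j₁ : Fin (t₁.length + 1) := Fin.castSucc k₀ with hj₁def
  set j₂ : Fin (t₁.length + 1) := Fin.last t₁.length with hj₂def
  have hj₁j₂ : j₁ ≠ j₂ := (Fin.castSucc_lt_last k₀).ne
  -- values of t at the relevant spots
  have htj₁c : t j₁.castSucc = A := by
    show (t₁.snoc ⊤ htrel) (Fin.castSucc (Fin.castSucc k₀)) = A
    refine (RelSeries.snoc_castSucc t₁ ⊤ htrel (Fin.castSucc k₀)).trans ?_
    show (v.smash u₂ (hvl.trans hu₂h.symm)) (Fin.castSucc (Fin.castAdd u₂.length i₀)) = A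
    refine (RelSeries.smash_castAdd (p := v) (q := u₂) (hvl.trans hu₂h.symm) i₀).trans ?_
    show (u₁.snoc B hvrel) (Fin.castSucc i₀) = A
    refine (RelSeries.snoc_castSucc u₁ B hvrel i₀).trans ?_
    exact hu₁l
  have htj₁s : t j₁.succ = B := by
    show (t₁.snoc ⊤ htrel) ((Fin.castSucc k₀).succ) = B
    rw [Fin.succ_castSucc]
    refine (RelSeries.snoc_castSucc t₁ ⊤ htrel k₀.succ).trans ?_
    show (v.smash u₂ (hvl.trans hu₂h.symm)) ((Fin.castAdd u₂.length i₀).succ) = B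
    refine (RelSeries.smash_succ_castAdd (p := v) (q := u₂) (hvl.trans hu₂h.symm) i₀).trans ?_
    show (u₁.snoc B hvrel) ((Fin.last u₁.length).succ) = B
    rw [Fin.succ_last]
    exact hvl
  have htj₂c : t j₂.castSucc = K := by
    show (t₁.snoc ⊤ htrel) (Fin.castSucc (Fin.last t₁.length)) = K
    rw [RelSeries.snoc_castSucc]
    exact ht₁l
  have htj₂s : t j₂.succ = ⊤ := by
    show (t₁.snoc ⊤ htrel) ((Fin.last t₁.length).succ) = ⊤
    rw [Fin.succ_last]
    exact RelSeries.last_snoc _ _ _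
  -- σ-factors of t
  have hf₁ : Nonempty ((↥(t j₁.succ) ⧸
      Submodule.comap (t j₁.succ).subtype (t j₁.castSucc)) ≃ₗ[R] σ) :=
    stmt16_fct_congr htj₁c.symm htj₁s.symm hf1
  have hf₂ : Nonempty ((↥(t j₂.succ) ⧸
      Submodule.comap (t j₂.succ).subtype (t j₂.castSucc)) ≃ₗ[R] σ) := by
    refine stmt16_fct_congr htj₂c.symm htj₂s.symm ⟨?_⟩
    exact (stmt16_topQuot K).trans eKσ
  -- Jordan–Hölder
  have hth : t.head = s.head := by
    show (t₁.snoc ⊤ htrel).head = s.head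
    rw [RelSeries.head_snoc]
    show (v.smash u₂ (hvl.trans hu₂h.symm)).head = s.head
    rw [RelSeries.head_smash]
    show (u₁.snoc B hvrel).head = s.head
    rw [RelSeries.head_snoc, hu₁h, hhead]
  have htl : t.last = s.last := by
    show (t₁.snoc ⊤ htrel).last = s.last
    rw [RelSeries.last_snoc, hlast]
  obtain ⟨f, hiso⟩ := CompositionSeries.jordan_holder t s hth htl
  have hsubsing : Subsingleton {i : Fin s.length //
      Nonempty ((↥(s.toFun i.succ) ⧸
        Submodule.comap (s.toFun i.succ).subtype (s.toFun i.castSucc)) ≃ₗ[R] σ)} :=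
    (Nat.card_eq_one_iff_unique.mp hmult).1
  have key : ∀ j : Fin t.length,
      Nonempty ((↥(t j.succ) ⧸ Submodule.comap (t j.succ).subtype (t j.castSucc)) ≃ₗ[R] σ) →
      Nonempty ((↥(s.toFun (f j).succ) ⧸
        Submodule.comap (s.toFun (f j).succ).subtype (s.toFun (f j).castSucc)) ≃ₗ[R] σ) := by
    intro j hj
    have g := JordanHolderLattice.Iso.linearEquiv (hiso j)
    obtain ⟨h⟩ := hj
    exact ⟨g.symm.trans h⟩
  have hx₁ := key j₁ hf₁
  have hx₂ := key j₂ hf₂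
  have : (⟨f j₁, hx₁⟩ : {i : Fin s.length //
      Nonempty ((↥(s.toFun i.succ) ⧸
        Submodule.comap (s.toFun i.succ).subtype (s.toFun i.castSucc)) ≃ₗ[R] σ)}) =
      ⟨f j₂, hx₂⟩ := hsubsing.elim _ _
  exact hj₁j₂ (f.injective (congrArg Subtype.val this))
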